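/- Let λ > 0, L > 0, let x₁, …, x_t ∈ ℝ^d satisfy ‖x_s‖₂ ≤ L for all s, and set A = λ·I_d + Σ_{s=1}^t x_s x_sᵀ. Let G be a real symmetric positive semidefinite d×d matrix and Δ ≥ 0 a real number such that (i) rank(G) ≤ 2l for an integer l with 1 ≤ 2l ≤ d, (ii) Σ_{s=1}^t x_s x_sᵀ ⪯ G + Δ·I_d, and (iii) Tr(G) ≤ t·L². Then ln( det(A) / λ^d ) ≤ d·ln(1 + Δ/λ) + 2l·ln(1 + t·L² / (2l·λ)). -/

import Mathlib

open Matrix Real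

section Aux

variable {d : ℕ}

private lemma aux_det_smul_one_add {C : Matrix (Fin d) (Fin d) ℝ} (hC : C.IsHermitian) (c : ℝ) :
    (c • (1 : Matrix (Fin d) (Fin d) ℝ) + C).det = ∏ i, (c + hC.eigenvalues i) := by
  set U : Matrix (Fin d) (Fin d) ℝ := (hC.eigenvectorUnitary : Matrix (Fin d) (Fin d) ℝ) with hU
  have hUU : U * star U = 1 := Matrix.mem_unitaryGroup_iff.mp hC.eigenvectorUnitary.2
  set Dg : Matrix (Fin d) (Fin d) ℝ := Matrix.diagonal (RCLike.ofReal ∘ hC.eigenvalues) with hDg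
  have key : c • (1 : Matrix (Fin d) (Fin d) ℝ) + C = U * (c • 1 + Dg) * star U := by
    conv_lhs => rw [hC.spectral_theorem, Unitary.conjStarAlgAut_apply]
    rw [Matrix.mul_add, Matrix.add_mul, Matrix.mul_smul, Matrix.mul_one, Matrix.smul_mul, hUU]
  rw [key, Matrix.det_mul, Matrix.det_mul]
  have hdetU : U.det * (star U).det = 1 := by
    rw [← Matrix.det_mul, hUU, Matrix.det_one]
  have : U.det * (c • 1 + Dg).det * (star U).det
      = (c • 1 + Dg).det * (U.det * (star U).det) := by ring
  rw [this, hdetU, mul_one, hDg, Matrix.smul_one_eq_diagonal, Matrix.diagonal_add,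
    Matrix.det_diagonal]
  simp [RCLike.ofReal_real_eq_id]

private lemma aux_trace_eq_sum_eigenvalues {C : Matrix (Fin d) (Fin d) ℝ} (hC : C.IsHermitian) :
    C.trace = ∑ i, hC.eigenvalues i := by
  conv_lhs => rw [hC.spectral_theorem, Unitary.conjStarAlgAut_apply]
  rw [Matrix.trace_mul_cycle]
  rw [show star (hC.eigenvectorUnitary : Matrix (Fin d) (Fin d) ℝ)
      * (hC.eigenvectorUnitary : Matrix (Fin d) (Fin d) ℝ) = 1 from
    Matrix.mem_unitaryGroup_iff'.mp hC.eigenvectorUnitary.2]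
  rw [Matrix.one_mul, Matrix.trace_diagonal]
  simp [RCLike.ofReal_real_eq_id]

private lemma aux_one_le_det_one_add {C : Matrix (Fin d) (Fin d) ℝ} (hC : C.PosSemidef) :
    (1 : ℝ) ≤ (1 + C).det := by
  have h := aux_det_smul_one_add hC.1 1
  rw [one_smul] at h
  rw [h]
  calc (1:ℝ) = ∏ _i : Fin d, (1:ℝ) := by simp
    _ ≤ ∏ i, (1 + hC.1.eigenvalues i) := by
        refine Finset.prod_le_prod (fun i _ => zero_le_one) (fun i _ => ?_)
        linarith [hC.eigenvalues_nonneg i]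

open scoped MatrixOrder in
private lemma aux_det_le_det_add {A P : Matrix (Fin d) (Fin d) ℝ}
    (hA : A.PosDef) (hP : P.PosSemidef) : A.det ≤ (A + P).det := by
  set R := CFC.sqrt P with hRdef
  have hR : R.PosSemidef := (CFC.sqrt_nonneg P).posSemidef
  have hRR : R * R = P := CFC.sqrt_mul_sqrt_self P hP.nonneg
  have hAinv : (A⁻¹).PosDef := hA.inv
  have hinv : A * A⁻¹ = 1 := Matrix.mul_nonsing_inv _ (by
    exact isUnit_iff_isUnit_det A |>.mp hA.isUnit)
  have key : A + P = A * (1 + A⁻¹ * R * R) := by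
    rw [Matrix.mul_add, Matrix.mul_one, ← Matrix.mul_assoc, ← Matrix.mul_assoc, hinv,
      Matrix.one_mul, hRR]
  have h1 : (1 : ℝ) ≤ (1 + A⁻¹ * R * R).det := by
    have hcomm : (1 + A⁻¹ * R * R).det = (1 + R * (A⁻¹ * R)).det :=
      Matrix.det_one_add_mul_comm (A⁻¹ * R) R
    have hps : (R * A⁻¹ * Rᴴ).PosSemidef := hAinv.posSemidef.mul_mul_conjTranspose_same R
    rw [hR.1.eq] at hps
    rw [hcomm, ← Matrix.mul_assoc]
    exact aux_one_le_det_one_add hps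
  rw [key, Matrix.det_mul]
  nlinarith [hA.det_pos]

private lemma aux_vecMulVec_psd (v : Fin d → ℝ) : (Matrix.vecMulVec v v).PosSemidef := by
  have h : Matrix.vecMulVec v v = (Matrix.replicateRow Unit v)ᴴ * Matrix.replicateRow Unit v := by
    rw [Matrix.conjTranspose_replicateRow, Matrix.vecMulVec_eq Unit]
    simp
  rw [h]
  exact Matrix.posSemidef_conjTranspose_mul_self _

private lemma aux_sum_psd {t : ℕ} (x : Fin t → Fin d → ℝ) :
    (∑ s, Matrix.vecMulVec (x s) (x s)).PosSemidef := by
  classical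
  refine Finset.sum_induction _ _ (fun a b ha hb => ha.add hb) ?_ ?_
  · exact Matrix.PosSemidef.zero
  · exact fun s _ => aux_vecMulVec_psd (x s)

end Aux

/-- **Multi-scale sketch-based determinant–trace inequality.**  Let
`A = λ·I + ∑ₛ xₛxₛᵀ` with `‖xₛ‖₂ ≤ L`, and let `G` be a symmetric PSD matrix of rank at
most `2l` with `∑ₛ xₛxₛᵀ ⪯ G + Δ·I` and `Tr G ≤ t·L²`.  Then
`ln (det A / λ^d) ≤ d·ln (1 + Δ/λ) + 2l·ln (1 + t·L²/(2l·λ))`. -/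
theorem det_trace_inequality {d t l : ℕ} (hl : 1 ≤ l) (hld : 2 * l ≤ d)
    (lam L : ℝ) (hlam : 0 < lam) (hL : 0 < L)
    (x : Fin t → Fin d → ℝ) (hx : ∀ s, Real.sqrt (x s ⬝ᵥ x s) ≤ L)
    (G : Matrix (Fin d) (Fin d) ℝ) (hG : G.PosSemidef)
    (Δ : ℝ) (hΔ : 0 ≤ Δ)
    (hrank : G.rank ≤ 2 * l)
    (hdom : (G + Δ • (1 : Matrix (Fin d) (Fin d) ℝ)
      - ∑ s, Matrix.vecMulVec (x s) (x s)).PosSemidef)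
    (htr : G.trace ≤ t * L ^ 2) :
    Real.log
        ((lam • (1 : Matrix (Fin d) (Fin d) ℝ) + ∑ s, Matrix.vecMulVec (x s) (x s)).det
          / lam ^ d)
      ≤ d * Real.log (1 + Δ / lam)
        + 2 * l * Real.log (1 + t * L ^ 2 / (2 * l * lam)) := by
  classical
  set S : Matrix (Fin d) (Fin d) ℝ := ∑ s, Matrix.vecMulVec (x s) (x s) with hSdef
  have hS : S.PosSemidef := aux_sum_psd x
  have hlam1 : ((lam • (1 : Matrix (Fin d) (Fin d) ℝ))).PosDef := by
    rw [Matrix.smul_one_eq_diagonal]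
    exact Matrix.posDef_diagonal_iff.mpr fun i => hlam
  have hA : (lam • (1 : Matrix (Fin d) (Fin d) ℝ) + S).PosDef := hlam1.add_posSemidef hS
  set A : Matrix (Fin d) (Fin d) ℝ := lam • 1 + S with hAdef
  -- determinant monotonicity
  have hAB : A + (G + Δ • (1 : Matrix (Fin d) (Fin d) ℝ) - S)
      = (lam + Δ) • (1 : Matrix (Fin d) (Fin d) ℝ) + G := by
    rw [hAdef, add_smul]; abel
  have hdet1 : A.det ≤ ((lam + Δ) • (1 : Matrix (Fin d) (Fin d) ℝ) + G).det := by
    have := aux_det_le_det_add hA hdom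
    rwa [hAB] at this
  -- eigenvalues
  set μ : Fin d → ℝ := hG.1.eigenvalues with hμdef
  have hμ0 : ∀ i, 0 ≤ μ i := hG.eigenvalues_nonneg
  have hdet2 : ((lam + Δ) • (1 : Matrix (Fin d) (Fin d) ℝ) + G).det
      = ∏ i, (lam + Δ + μ i) := aux_det_smul_one_add hG.1 (lam + Δ)
  have htr' : ∑ i, μ i ≤ t * L ^ 2 := by
    rw [← aux_trace_eq_sum_eigenvalues hG.1]; exact htr
  -- support
  set Z : Finset (Fin d) := Finset.univ.filter (fun i => μ i ≠ 0) with hZdef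
  have hZcard : Z.card ≤ 2 * l := by
    have := hG.1.rank_eq_card_non_zero_eigs
    rw [this, Fintype.card_subtype] at hrank
    exact hrank
  obtain ⟨T2, hZT, hTcard⟩ := Finset.exists_superset_card_eq hZcard (by simpa using hld)
  -- positivity facts
  have hTpos : (0 : ℝ) ≤ t * L ^ 2 := by positivity
  have hlpos : (0 : ℝ) < 2 * l := by
    have : (1 : ℝ) ≤ (l : ℝ) := by exact_mod_cast hl
    linarith
  have hdetApos : 0 < A.det := hA.det_pos
  have hterm : ∀ i, 0 < lam + Δ + μ i := fun i => by have := hμ0 i; linarith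
  -- log det A ≤ sum of logs
  have hlog1 : Real.log A.det ≤ ∑ i, Real.log (lam + Δ + μ i) := by
    rw [← Real.log_prod (fun i _ => (hterm i).ne')]
    apply Real.log_le_log hdetApos
    rw [← hdet2]; exact hdet1
  -- termwise bound
  have hlog2 : ∀ i, Real.log (lam + Δ + μ i)
      ≤ Real.log (1 + Δ / lam) + Real.log lam + Real.log (1 + μ i / lam) := by
    intro i
    have h1 : 0 < 1 + Δ / lam := by positivity
    have h2 : 0 < 1 + μ i / lam := by have := hμ0 i; positivity
    have hle : lam + Δ + μ i ≤ (1 + Δ / lam) * lam * (1 + μ i / lam) := by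
      have hexp : (1 + Δ / lam) * lam * (1 + μ i / lam)
          = lam + Δ + μ i + Δ * μ i / lam := by field_simp; ring
      rw [hexp]
      have : 0 ≤ Δ * μ i / lam := div_nonneg (mul_nonneg hΔ (hμ0 i)) hlam.le
      linarith
    calc Real.log (lam + Δ + μ i) ≤ Real.log ((1 + Δ / lam) * lam * (1 + μ i / lam)) :=
          Real.log_le_log (hterm i) hle
      _ = Real.log (1 + Δ / lam) + Real.log lam + Real.log (1 + μ i / lam) := by
          rw [Real.log_mul (by positivity) h2.ne', Real.log_mul h1.ne' hlam.ne']
  have hlog3 : ∑ i, Real.log (lam + Δ + μ i)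
      ≤ d * Real.log (1 + Δ / lam) + d * Real.log lam + ∑ i, Real.log (1 + μ i / lam) := by
    calc ∑ i, Real.log (lam + Δ + μ i)
        ≤ ∑ i : Fin d, (Real.log (1 + Δ / lam) + Real.log lam + Real.log (1 + μ i / lam)) :=
          Finset.sum_le_sum fun i _ => hlog2 i
      _ = d * Real.log (1 + Δ / lam) + d * Real.log lam + ∑ i, Real.log (1 + μ i / lam) := by
          rw [Finset.sum_add_distrib, Finset.sum_add_distrib, Finset.sum_const,
            Finset.sum_const, Finset.card_univ, Fintype.card_fin]
          push_cast; ring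
  -- restrict the sum to T2
  have hsum_restrict : ∑ i, Real.log (1 + μ i / lam) = ∑ i ∈ T2, Real.log (1 + μ i / lam) := by
    refine (Finset.sum_subset (Finset.subset_univ T2) ?_).symm
    intro i _ hi
    have hiZ : i ∉ Z := fun h => hi (hZT h)
    have : μ i = 0 := by
      by_contra h
      exact hiZ (Finset.mem_filter.mpr ⟨Finset.mem_univ i, h⟩)
    simp [this]
  -- Jensen
  have hjensen : ∑ i ∈ T2, Real.log (1 + μ i / lam)
      ≤ 2 * l * Real.log (1 + t * L ^ 2 / (2 * l * lam)) := by
    have hw : ∑ _i ∈ T2, (1 : ℝ) / (2 * l) = 1 := by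
      rw [Finset.sum_const, hTcard, nsmul_eq_mul]
      push_cast
      field_simp
    have hmem : ∀ i ∈ T2, (1 + μ i / lam) ∈ Set.Ioi (0 : ℝ) := fun i _ => by
      have := hμ0 i; simp only [Set.mem_Ioi]; positivity
    have hJ := strictConcaveOn_log_Ioi.concaveOn.le_map_sum
      (w := fun _ => (1 : ℝ) / (2 * l)) (p := fun i => 1 + μ i / lam)
      (t := T2) (fun i _ => by positivity) hw hmem
    simp only [smul_eq_mul] at hJ
    rw [← Finset.mul_sum, ← Finset.mul_sum] at hJ
    have hsum_p : ∑ i ∈ T2, (1 + μ i / lam) = 2 * l + (∑ i ∈ T2, μ i) / lam := by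
      rw [Finset.sum_add_distrib, Finset.sum_const, hTcard, Finset.sum_div]
      push_cast; ring
    have hsum_muT : ∑ i ∈ T2, μ i ≤ t * L ^ 2 :=
      le_trans (Finset.sum_le_sum_of_subset_of_nonneg (Finset.subset_univ T2)
        (fun i _ _ => hμ0 i)) htr'
    have h2llam : (0:ℝ) < 2 * l * lam := mul_pos hlpos hlam
    have harg : 1 / (2 * l) * ∑ i ∈ T2, (1 + μ i / lam) ≤ 1 + t * L ^ 2 / (2 * l * lam) := by
      rw [hsum_p]
      have heq : 1 / (2 * (l:ℝ)) * (2 * l + (∑ i ∈ T2, μ i) / lam)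
          = 1 + (∑ i ∈ T2, μ i) / (2 * l * lam) := by
        field_simp
      rw [heq]
      exact add_le_add_right ((div_le_div_iff_of_pos_right h2llam).mpr hsum_muT) 1
    have hargpos : 0 < 1 / (2 * l) * ∑ i ∈ T2, (1 + μ i / lam) := by
      rw [hsum_p]
      have hnn : 0 ≤ (∑ i ∈ T2, μ i) / lam :=
        div_nonneg (Finset.sum_nonneg fun i _ => hμ0 i) hlam.le
      exact mul_pos (one_div_pos.mpr hlpos) (by linarith)
    have hlogarg : Real.log (1 / (2 * l) * ∑ i ∈ T2, (1 + μ i / lam))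
        ≤ Real.log (1 + t * L ^ 2 / (2 * l * lam)) := Real.log_le_log hargpos harg
    have := le_trans hJ hlogarg
    calc ∑ i ∈ T2, Real.log (1 + μ i / lam)
        = 2 * l * (1 / (2 * l) * ∑ i ∈ T2, Real.log (1 + μ i / lam)) := by
          field_simp
      _ ≤ 2 * l * Real.log (1 + t * L ^ 2 / (2 * l * lam)) := by
          apply mul_le_mul_of_nonneg_left this hlpos.le
  -- assemble
  have hlhs : Real.log (A.det / lam ^ d) = Real.log A.det - d * Real.log lam := by
    rw [Real.log_div hdetApos.ne' (by positivity), Real.log_pow]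
  rw [hlhs]
  have := le_trans hlog1 hlog3
  rw [hsum_restrict] at this
  linarith [hjensen]
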